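/- For all real numbers a, b with |a| < 1 and b ≥ |a|, there exists a unique ρ = (ρ₁,ρ₂) ∈ T satisfying the system ρ₁ − ρ₂ = a and ρ₁ + ρ₂ + v(ρ) = b. -/

import Mathlib

open Real Set Topology Filter

/-- The speed function of the Borodin-Ferrari dynamics, with the convention `v (0,0) = 0`. -/
noncomputable def speed (ρ : ℝ × ℝ) : ℝ :=
  if ρ = (0, 0) then 0
  else (1 / π) * (Real.sin (π * ρ.1) * Real.sin (π * ρ.2) / Real.sin (π * (ρ.1 + ρ.2)))

/-- The triangle `T` on which the speed function is defined. -/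
def T : Set (ℝ × ℝ) := {ρ | 0 ≤ ρ.1 ∧ 0 ≤ ρ.2 ∧ ρ.1 + ρ.2 < 1}

noncomputable def gfun (a s : ℝ) : ℝ :=
  s + (Real.cos (π * a) - Real.cos (π * s)) / (2 * π * Real.sin (π * s))

lemma sin_pi_mul_pos {s : ℝ} (h0 : 0 < s) (h1 : s < 1) : 0 < Real.sin (π * s) :=
  Real.sin_pos_of_pos_of_lt_pi (by positivity) (by nlinarith [Real.pi_pos])

lemma speed_eq (a s : ℝ) :
    speed ((s + a) / 2, (s - a) / 2)
      = (Real.cos (π * a) - Real.cos (π * s)) / (2 * π * Real.sin (π * s)) := by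
  by_cases h : ((s + a) / 2, (s - a) / 2) = ((0 : ℝ), (0 : ℝ))
  · rw [Prod.mk.injEq] at h
    have hs : s = 0 := by linarith [h.1, h.2]
    have ha : a = 0 := by linarith [h.1, h.2]
    simp [speed, hs, ha]
  · rw [speed, if_neg h]
    have key : Real.sin (π * ((s + a) / 2)) * Real.sin (π * ((s - a) / 2))
        = (Real.cos (π * a) - Real.cos (π * s)) / 2 := by
      have h1 := Real.cos_sub (π * ((s + a) / 2)) (π * ((s - a) / 2))
      have h2 := Real.cos_add (π * ((s + a) / 2)) (π * ((s - a) / 2))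
      have e1 : π * ((s + a) / 2) - π * ((s - a) / 2) = π * a := by ring
      have e2 : π * ((s + a) / 2) + π * ((s - a) / 2) = π * s := by ring
      rw [e1] at h1; rw [e2] at h2
      linarith
    have e3 : π * ((s + a) / 2 + (s - a) / 2) = π * s := by ring
    rw [key, e3]
    ring

lemma gfun_hasDerivAt (a : ℝ) {s : ℝ} (h0 : 0 < s) (h1 : s < 1) :
    HasDerivAt (gfun a)
      (1 + ((π * Real.sin (π * s)) * (2 * π * Real.sin (π * s)) -
        (Real.cos (π * a) - Real.cos (π * s)) * (2 * π * (π * Real.cos (π * s)))) /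
        (2 * π * Real.sin (π * s)) ^ 2) s := by
  have hlin : HasDerivAt (fun x : ℝ => π * x) π s := by
    simpa using (hasDerivAt_id s).const_mul π
  have hsin0 : HasDerivAt (fun x : ℝ => Real.sin (π * x)) (Real.cos (π * s) * π) s := by
    exact (Real.hasDerivAt_sin (π * s)).comp s hlin
  have hsin : HasDerivAt (fun x : ℝ => Real.sin (π * x)) (π * Real.cos (π * s)) s := by
    convert hsin0 using 1; ring
  have hcos0 : HasDerivAt (fun x : ℝ => Real.cos (π * x)) (-Real.sin (π * s) * π) s := by
    exact (Real.hasDerivAt_cos (π * s)).comp s hlin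
  have hcos : HasDerivAt (fun x : ℝ => Real.cos (π * x)) (-(π * Real.sin (π * s))) s := by
    convert hcos0 using 1; ring
  have hN : HasDerivAt (fun x : ℝ => Real.cos (π * a) - Real.cos (π * x))
      (π * Real.sin (π * s)) s := by
    simpa using hcos.const_sub (Real.cos (π * a))
  have hD : HasDerivAt (fun x : ℝ => 2 * π * Real.sin (π * x))
      (2 * π * (π * Real.cos (π * s))) s := hsin.const_mul (2 * π)
  have hDne : 2 * π * Real.sin (π * s) ≠ 0 := by
    have := sin_pi_mul_pos h0 h1
    positivity
  exact (hasDerivAt_id s).add (hN.div hD hDne)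

lemma gfun_deriv_pos (a : ℝ) {s : ℝ} (h0 : 0 < s) (h1 : s < 1) :
    0 < deriv (gfun a) s := by
  rw [(gfun_hasDerivAt a h0 h1).deriv]
  have hS := sin_pi_mul_pos h0 h1
  have hpi := Real.pi_pos
  have h2 : Real.cos (π * a) * Real.cos (π * s) ≤ 1 := by
    nlinarith [Real.cos_le_one (π * a), Real.neg_one_le_cos (π * a),
      Real.cos_le_one (π * s), Real.neg_one_le_cos (π * s)]
  have hnum : 0 ≤ (π * Real.sin (π * s)) * (2 * π * Real.sin (π * s)) -
      (Real.cos (π * a) - Real.cos (π * s)) * (2 * π * (π * Real.cos (π * s))) := by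
    have h3 : Real.sin (π * s) ^ 2 + Real.cos (π * s) ^ 2 = 1 := Real.sin_sq_add_cos_sq _
    nlinarith [mul_pos hpi hpi]
  have hden : (0:ℝ) < (2 * π * Real.sin (π * s)) ^ 2 := by positivity
  have := div_nonneg hnum (le_of_lt hden)
  linarith

lemma gfun_mono_Ioo (a : ℝ) : StrictMonoOn (gfun a) (Ioo 0 1) := by
  apply strictMonoOn_of_deriv_pos (convex_Ioo 0 1)
  · apply ContinuousOn.add continuousOn_id
    apply ContinuousOn.div
    · fun_prop
    · fun_prop
    · intro s hs
      have := sin_pi_mul_pos hs.1 hs.2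
      positivity
  · intro s hs
    rw [interior_Ioo] at hs
    exact gfun_deriv_pos a hs.1 hs.2

lemma gfun_abs (a : ℝ) : gfun a |a| = |a| := by
  have h : Real.cos (π * |a|) = Real.cos (π * a) := by
    rw [show π * |a| = |π * a| by rw [abs_mul, abs_of_pos Real.pi_pos], Real.cos_abs]
  simp [gfun, h]

lemma gfun_gt {a s : ℝ} (hs : |a| < s) (hs1 : s < 1) : s < gfun a s := by
  have hpi := Real.pi_pos
  have hcc : Real.cos (π * s) < Real.cos (π * a) := by
    have := Real.cos_lt_cos_of_nonneg_of_le_pi (x := π * |a|) (y := π * s)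
      (by positivity) (by nlinarith) (by nlinarith [abs_nonneg a])
    rwa [show π * |a| = |π * a| by rw [abs_mul, abs_of_pos Real.pi_pos], Real.cos_abs] at this
  have hS := sin_pi_mul_pos (lt_of_le_of_lt (abs_nonneg a) hs) hs1
  have : 0 < (Real.cos (π * a) - Real.cos (π * s)) / (2 * π * Real.sin (π * s)) := by
    apply div_pos (by linarith); positivity
  unfold gfun; linarith

lemma gfun_mono_Ico {a : ℝ} (ha : |a| < 1) : StrictMonoOn (gfun a) (Ico |a| 1) := by
  intro x hx y hy hxy
  rcases eq_or_lt_of_le hx.1 with h | h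
  · rw [← h, gfun_abs]
    have h1 : |a| < y := h ▸ hxy
    have := gfun_gt h1 hy.2
    linarith
  · exact gfun_mono_Ioo a ⟨lt_of_le_of_lt (abs_nonneg a) h, hx.2⟩
      ⟨lt_of_le_of_lt (abs_nonneg a) (lt_trans h hxy), hy.2⟩
      hxy

lemma exists_lower {a b : ℝ} (ha : |a| < 1) (hab : |a| < b) :
    ∃ t ∈ Ioo |a| 1, gfun a t < b := by
  have hpi := Real.pi_pos
  have hev2 : ∀ᶠ s in 𝓝[>] |a|, s ∈ Ioo |a| 1 :=
    Filter.eventually_of_mem (Ioo_mem_nhdsGT ha) (fun _ h => h)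
  by_cases h0 : a = 0
  · subst h0
    simp only [abs_zero] at hab hev2 ⊢
    set h : ℝ → ℝ := fun s => s + Real.sin (π * s / 2) / (2 * π * Real.cos (π * s / 2)) with hh
    have hcont : ContinuousAt h 0 := by
      apply ContinuousAt.add continuousAt_id
      apply ContinuousAt.div (by fun_prop) (by fun_prop)
      norm_num [Real.pi_ne_zero]
    have hval : h 0 = 0 := by simp [hh]
    have htend : Filter.Tendsto h (𝓝[>] (0:ℝ)) (𝓝 0) := by
      have := hcont.tendsto.mono_left (nhdsWithin_le_nhds (s := Ioi (0:ℝ)))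
      rwa [hval] at this
    have hev1 : ∀ᶠ s in 𝓝[>] (0:ℝ), h s < b := htend.eventually_lt_const hab
    obtain ⟨t, ht1, ht2⟩ := (hev1.and hev2).exists
    refine ⟨t, ht2, ?_⟩
    have heq : gfun 0 t = h t := by
      have h2u : π * t = 2 * (π * t / 2) := by ring
      have hsin2 : Real.sin (π * t) = 2 * Real.sin (π * t / 2) * Real.cos (π * t / 2) := by
        rw [h2u, Real.sin_two_mul]; ring
      have hcos2 : Real.cos (π * t) = 1 - 2 * Real.sin (π * t / 2) ^ 2 := by
        have hc2 := Real.cos_two_mul (π * t / 2)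
        rw [← h2u] at hc2
        nlinarith [Real.sin_sq_add_cos_sq (π * t / 2)]
      have hs : 0 < Real.sin (π * t / 2) :=
        Real.sin_pos_of_pos_of_lt_pi (by nlinarith [ht2.1]) (by nlinarith [ht2.2])
      have hc : 0 < Real.cos (π * t / 2) :=
        Real.cos_pos_of_mem_Ioo ⟨by nlinarith [ht2.1], by nlinarith [ht2.2]⟩
      unfold gfun
      rw [hsin2, hcos2, hh]
      simp only [mul_zero, Real.cos_zero]
      congr 1; rw [div_eq_div_iff (by positivity) (by positivity)]; ring
    rw [heq]; exact ht1
  · have habs : 0 < |a| := abs_pos.mpr h0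
    have hS := sin_pi_mul_pos habs ha
    have hcont : ContinuousAt (gfun a) |a| := by
      apply ContinuousAt.add continuousAt_id
      apply ContinuousAt.div (by fun_prop) (by fun_prop)
      positivity
    have htend : Filter.Tendsto (gfun a) (𝓝[>] |a|) (𝓝 |a|) := by
      have := hcont.tendsto.mono_left (nhdsWithin_le_nhds (s := Ioi |a|))
      rwa [gfun_abs a] at this
    have hev1 : ∀ᶠ s in 𝓝[>] |a|, gfun a s < b :=
      htend.eventually_lt_const hab
    obtain ⟨t, ht1, ht2⟩ := (hev1.and hev2).exists
    exact ⟨t, ht2, ht1⟩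

lemma exists_upper {a b : ℝ} (ha : |a| < 1) (hb : 0 < b) :
    ∃ t ∈ Ioo |a| 1, b < gfun a t := by
  have hpi := Real.pi_pos
  have ha0 := abs_nonneg a
  set m := Real.cos (π * a) - Real.cos (π * ((1 + |a|) / 2)) with hm_def
  have hm : 0 < m := by
    have := Real.cos_lt_cos_of_nonneg_of_le_pi (x := π * |a|) (y := π * ((1 + |a|) / 2))
      (by positivity) (by nlinarith) (by nlinarith)
    rw [show π * |a| = |π * a| by rw [abs_mul, abs_of_pos Real.pi_pos], Real.cos_abs] at this
    simp only [hm_def]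
    linarith
  have htend : Filter.Tendsto (fun s => 2 * π * Real.sin (π * s)) (𝓝[<] (1:ℝ)) (𝓝 0) := by
    have hc : ContinuousAt (fun s : ℝ => 2 * π * Real.sin (π * s)) 1 := by fun_prop
    have := hc.tendsto.mono_left (nhdsWithin_le_nhds (s := Iio (1:ℝ)))
    simpa [Real.sin_pi] using this
  have hev1 : ∀ᶠ s in 𝓝[<] (1:ℝ), 2 * π * Real.sin (π * s) < m / b :=
    htend.eventually_lt_const (div_pos hm hb)
  have hev2 : ∀ᶠ s in 𝓝[<] (1:ℝ), s ∈ Ioo ((1 + |a|) / 2) 1 :=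
    Filter.eventually_of_mem (Ioo_mem_nhdsLT_of_mem ⟨by linarith, le_refl 1⟩) (fun _ h => h)
  obtain ⟨t, ht1, ht2⟩ := (hev1.and hev2).exists
  have htmem : t ∈ Ioo |a| 1 := ⟨by linarith [ht2.1], ht2.2⟩
  refine ⟨t, htmem, ?_⟩
  have hS := sin_pi_mul_pos (lt_of_le_of_lt ha0 htmem.1) htmem.2
  have hd : 0 < 2 * π * Real.sin (π * t) := by positivity
  have hnum : m ≤ Real.cos (π * a) - Real.cos (π * t) := by
    have := Real.cos_le_cos_of_nonneg_of_le_pi (x := π * ((1 + |a|) / 2)) (y := π * t)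
      (by positivity) (by nlinarith [htmem.2]) (by nlinarith [ht2.1])
    simp only [hm_def]
    linarith
  have hbm : b < m / (2 * π * Real.sin (π * t)) := by
    rw [lt_div_iff₀ hd]
    have h1 : 2 * π * Real.sin (π * t) * b < m := (lt_div_iff₀ hb).mp ht1
    linarith
  unfold gfun
  have ht0 : 0 < t := lt_of_le_of_lt ha0 htmem.1
  calc b < m / (2 * π * Real.sin (π * t)) := hbm
    _ ≤ (Real.cos (π * a) - Real.cos (π * t)) / (2 * π * Real.sin (π * t)) := by
        gcongr
    _ ≤ t + (Real.cos (π * a) - Real.cos (π * t)) / (2 * π * Real.sin (π * t)) := by linarith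

lemma exists_root {a b : ℝ} (ha : |a| < 1) (hb : |a| ≤ b) :
    ∃ s ∈ Ico |a| 1, gfun a s = b := by
  rcases eq_or_lt_of_le hb with h | h
  · exact ⟨|a|, ⟨le_refl _, ha⟩, by rw [gfun_abs, h]⟩
  · obtain ⟨t₀, ht₀, hg₀⟩ := exists_lower ha h
    obtain ⟨t₁, ht₁, hg₁⟩ := exists_upper ha (lt_of_le_of_lt (abs_nonneg a) h)
    have h01 : t₀ < t₁ := by
      by_contra hc
      push_neg at hc
      rcases eq_or_lt_of_le hc with he | hl
      · rw [he] at hg₁; linarith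
      · have := gfun_mono_Ioo a ⟨lt_of_le_of_lt (abs_nonneg a) ht₁.1, ht₁.2⟩
          ⟨lt_of_le_of_lt (abs_nonneg a) ht₀.1, ht₀.2⟩ hl
        linarith
    have hcont : ContinuousOn (gfun a) (Icc t₀ t₁) := by
      apply ContinuousOn.add continuousOn_id
      apply ContinuousOn.div (by fun_prop) (by fun_prop)
      intro s hs
      have := sin_pi_mul_pos (lt_of_le_of_lt (abs_nonneg a) (lt_of_lt_of_le ht₀.1 hs.1))
        (lt_of_le_of_lt hs.2 ht₁.2)
      positivity
    have hmem : b ∈ Icc (gfun a t₀) (gfun a t₁) := ⟨le_of_lt hg₀, le_of_lt hg₁⟩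
    obtain ⟨s, hs, hgs⟩ := intermediate_value_Icc (le_of_lt h01) hcont hmem
    exact ⟨s, ⟨le_of_lt (lt_of_lt_of_le ht₀.1 hs.1), lt_of_le_of_lt hs.2 ht₁.2⟩, hgs⟩

/-- For all `a, b` with `|a| < 1` and `b ≥ |a|`, there is a unique `ρ ∈ T` with
`ρ₁ - ρ₂ = a` and `ρ₁ + ρ₂ + v(ρ) = b`. -/
theorem stmt9 (a b : ℝ) (ha : |a| < 1) (hb : |a| ≤ b) :
    ∃! ρ : ℝ × ℝ, ρ ∈ T ∧ ρ.1 - ρ.2 = a ∧ ρ.1 + ρ.2 + speed ρ = b := by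
  obtain ⟨s, hsmem, hgs⟩ := exists_root ha hb
  have hna : -s ≤ a := by
    have := neg_abs_le a; linarith [hsmem.1]
  have has : a ≤ s := le_trans (le_abs_self a) hsmem.1
  refine ⟨((s + a) / 2, (s - a) / 2), ⟨⟨by dsimp; linarith, by dsimp; linarith,
    by dsimp; linarith [hsmem.2]⟩, by dsimp; ring, ?_⟩, ?_⟩
  · dsimp only
    rw [speed_eq a s]
    unfold gfun at hgs
    linarith
  · rintro ⟨p, q⟩ ⟨hT, hdiff, heq⟩
    obtain ⟨hp0, hq0, hsum⟩ := hT
    dsimp only at hp0 hq0 hsum hdiff heq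
    have hps : p = (p + q + a) / 2 := by linarith
    have hqs : q = (p + q - a) / 2 := by linarith
    have hmem' : p + q ∈ Ico |a| 1 := by
      refine ⟨?_, hsum⟩
      rw [← hdiff]
      exact abs_le.mpr ⟨by linarith, by linarith⟩
    have hg' : gfun a (p + q) = b := by
      have hsp := speed_eq a (p + q)
      have hpair : (p, q) = ((p + q + a) / 2, (p + q - a) / 2) := by
        rw [Prod.mk.injEq]; exact ⟨hps, hqs⟩
      rw [hpair, hsp] at heq
      unfold gfun
      linarith
    have hss : p + q = s := (gfun_mono_Ico ha).injOn hmem' hsmem (by rw [hg', hgs])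
    rw [Prod.mk.injEq]
    constructor <;> linarith
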